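/- Let 0 < α < 10⁻⁶ and let n, d ∈ ℕ with n/150 ≤ d ≤ n/3. Let V, W be a partition of an n-element vertex set with |W| = d, and suppose H is a 3-uniform hypergraph on V ∪ W such that every vertex of H is α-good with respect to H_{n,d}(V,W). Then H contains a matching of size d. -/

import Mathlib

open Finset

set_option linter.unusedSectionVars false

namespace S10

variable {Vt : Type} [Fintype Vt] [DecidableEq Vt]

lemma inter_pair_card {a b : Vt} (hab : a ≠ b) (s : Finset Vt) :
    (({a, b} : Finset Vt) ∩ s).card
      = (if a ∈ s then 1 else 0) + (if b ∈ s then 1 else 0) := by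
  by_cases ha : a ∈ s <;> by_cases hb : b ∈ s
  · rw [Finset.insert_inter_of_mem ha, Finset.singleton_inter_of_mem hb]
    simp [Finset.card_pair hab, ha, hb]
  · rw [Finset.insert_inter_of_mem ha, Finset.singleton_inter_of_notMem hb]
    simp [ha, hb]
  · rw [Finset.insert_inter_of_notMem ha, Finset.singleton_inter_of_mem hb]
    simp [ha, hb]
  · rw [Finset.insert_inter_of_notMem ha, Finset.singleton_inter_of_notMem hb]
    simp [ha, hb]

theorem swap_matching (Bad : Finset Vt → Prop) [DecidablePred Bad]
    (R : Finset Vt) (Δ : ℕ)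
    (hdeg : ∀ x ∈ R, (R.filter fun y => y ≠ x ∧ Bad {x, y}).card ≤ Δ)
    (hR : 3 * Δ + 2 ≤ R.card) :
    ∀ u : ℕ, 2 * u ≤ R.card →
      ∃ M : Finset (Finset Vt), M.card = u ∧
        (∀ p ∈ M, p ⊆ R ∧ p.card = 2 ∧ ¬ Bad p) ∧
        (M : Set (Finset Vt)).PairwiseDisjoint id := by
  intro u
  induction u with
  | zero =>
    intro _
    exact ⟨∅, by simp, by simp, by simp⟩
  | succ u ih =>
    intro hu
    obtain ⟨M, hMcard, hMmem, hMdisj⟩ := ih (by omega)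
    classical
    set covered := M.biUnion id with hcovdef
    have hcovsub : covered ⊆ R := by
      intro z hz
      rcases Finset.mem_biUnion.1 hz with ⟨p, hp, hzp⟩
      exact (hMmem p hp).1 hzp
    have hdisj' : ∀ p ∈ M, ∀ q ∈ M, p ≠ q → Disjoint (id p) (id q) := by
      intro p hp q hq hpq
      exact hMdisj (Finset.mem_coe.2 hp) (Finset.mem_coe.2 hq) hpq
    have hcovcard : covered.card = 2 * u := by
      rw [hcovdef, Finset.card_biUnion hdisj']
      have : ∀ p ∈ M, (id p).card = 2 := fun p hp => (hMmem p hp).2.1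
      rw [Finset.sum_congr rfl this, Finset.sum_const, hMcard, smul_eq_mul, Nat.mul_comm]
    have hmemcov : ∀ p ∈ M, ∀ z ∈ p, z ∈ covered := by
      intro p hp z hz
      exact Finset.mem_biUnion.2 ⟨p, hp, hz⟩
    set U := R \ covered with hUdef
    have hUcard : U.card = R.card - 2 * u := by
      rw [hUdef, Finset.card_sdiff_of_subset hcovsub, hcovcard]
    by_cases hgood : ∃ a ∈ U, ∃ b ∈ U, a ≠ b ∧ ¬ Bad {a, b}
    · obtain ⟨a, ha, b, hb, hab, hnb⟩ := hgood
      have haR : a ∈ R := (Finset.mem_sdiff.1 ha).1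
      have hbR : b ∈ R := (Finset.mem_sdiff.1 hb).1
      have hanc : a ∉ covered := (Finset.mem_sdiff.1 ha).2
      have hbnc : b ∉ covered := (Finset.mem_sdiff.1 hb).2
      have hnotmem : ({a, b} : Finset Vt) ∉ M := by
        intro hmem
        exact hanc (hmemcov _ hmem a (by simp))
      refine ⟨insert {a, b} M, ?_, ?_, ?_⟩
      · rw [Finset.card_insert_of_notMem hnotmem, hMcard]
      · intro p hp
        rcases Finset.mem_insert.1 hp with rfl | hp
        · refine ⟨?_, Finset.card_pair hab, hnb⟩
          intro z hz
          rcases Finset.mem_insert.1 hz with rfl | hz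
          · exact haR
          · rw [Finset.mem_singleton.1 hz]; exact hbR
        · exact hMmem p hp
      · rw [Finset.coe_insert]
        refine hMdisj.insert ?_
        intro q hq _
        refine Finset.disjoint_left.2 ?_
        intro z hz hzq
        have hzc : z ∈ covered := hmemcov q (Finset.mem_coe.1 hq) z hzq
        rcases Finset.mem_insert.1 hz with rfl | hz
        · exact hanc hzc
        · exact hbnc (Finset.mem_singleton.1 hz ▸ hzc)
    · push_neg at hgood
      obtain ⟨x, hxU, y, hyU, hxy⟩ := Finset.one_lt_card.1 (by omega : 1 < U.card)
      have hUR : U ⊆ R := Finset.sdiff_subset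
      have hxR : x ∈ R := hUR hxU
      have hyR : y ∈ R := hUR hyU
      have hxnc : x ∉ covered := (Finset.mem_sdiff.1 hxU).2
      have hync : y ∉ covered := (Finset.mem_sdiff.1 hyU).2
      -- |U| ≤ Δ + 1
      have hUsmall : U.card ≤ Δ + 1 := by
        have hsub : U.erase x ⊆ R.filter (fun z => z ≠ x ∧ Bad {x, z}) := by
          intro z hz
          obtain ⟨hzx, hzU⟩ := Finset.mem_erase.1 hz
          exact Finset.mem_filter.2 ⟨hUR hzU, hzx, hgood x hxU z hzU (Ne.symm hzx)⟩
        have h1 := Finset.card_le_card hsub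
        have h2 := hdeg x hxR
        have h3 := Finset.card_erase_of_mem hxU
        omega
      set Px := R.filter (fun z => z ≠ x ∧ ¬ Bad {x, z}) with hPxdef
      set Py := R.filter (fun z => z ≠ y ∧ ¬ Bad {y, z}) with hPydef
      have hPcard : ∀ (w : Vt), w ∈ R →
          R.card ≤ 1 + Δ + (R.filter (fun z => z ≠ w ∧ ¬ Bad {w, z})).card := by
        intro w hw
        have hsplit : R ⊆ insert w ((R.filter fun z => z ≠ w ∧ Bad {w, z}) ∪
            (R.filter (fun z => z ≠ w ∧ ¬ Bad {w, z}))) := by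
          intro z hz
          by_cases hzw : z = w
          · simp [hzw]
          · by_cases hbz : Bad {w, z}
            · exact Finset.mem_insert.2 (Or.inr (Finset.mem_union_left _
                (Finset.mem_filter.2 ⟨hz, hzw, hbz⟩)))
            · exact Finset.mem_insert.2 (Or.inr (Finset.mem_union_right _
                (Finset.mem_filter.2 ⟨hz, hzw, hbz⟩)))
        have h1 := Finset.card_le_card hsplit
        have h2 := Finset.card_insert_le w ((R.filter fun z => z ≠ w ∧ Bad {w, z}) ∪
            (R.filter (fun z => z ≠ w ∧ ¬ Bad {w, z})))
        have h3 := Finset.card_union_le (R.filter fun z => z ≠ w ∧ Bad {w, z})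
            (R.filter (fun z => z ≠ w ∧ ¬ Bad {w, z}))
        have h4 := hdeg w hw
        omega
      have hPxcard : R.card ≤ 1 + Δ + Px.card := hPcard x hxR
      have hPycard : R.card ≤ 1 + Δ + Py.card := hPcard y hyR
      have hPcov : ∀ (w : Vt), w ∈ U →
          (R.filter (fun z => z ≠ w ∧ ¬ Bad {w, z})) ⊆ covered := by
        intro w hwU z hz
        obtain ⟨hzR, hzw, hnb⟩ := Finset.mem_filter.1 hz
        by_contra hzc
        have hzU : z ∈ U := Finset.mem_sdiff.2 ⟨hzR, hzc⟩
        exact hnb (hgood w hwU z hzU (Ne.symm hzw))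
      have hPxcov : Px ⊆ covered := hPcov x hxU
      have hPycov : Py ⊆ covered := hPcov y hyU
      have hsumP : ∀ (P : Finset Vt), P ⊆ covered → ∑ p ∈ M, (p ∩ P).card = P.card := by
        intro P hP
        have hbi : M.biUnion (fun p => p ∩ P) = P := by
          ext z
          simp only [Finset.mem_biUnion, Finset.mem_inter]
          constructor
          · rintro ⟨p, _, _, hz⟩; exact hz
          · intro hz
            rcases Finset.mem_biUnion.1 (hP hz) with ⟨p, hp, hzp⟩
            exact ⟨p, hp, hzp, hz⟩
        have hd : ∀ p ∈ M, ∀ q ∈ M, p ≠ q → Disjoint (p ∩ P) (q ∩ P) := by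
          intro p hp q hq hpq
          have h : Disjoint p q := hdisj' p hp q hq hpq
          exact h.mono Finset.inter_subset_left Finset.inter_subset_left
        calc ∑ p ∈ M, (p ∩ P).card = (M.biUnion (fun p => p ∩ P)).card :=
              (Finset.card_biUnion hd).symm
        _ = P.card := by rw [hbi]
      have hkey : ∃ e ∈ M, 3 ≤ (e ∩ Px).card + (e ∩ Py).card := by
        by_contra hc
        push_neg at hc
        have hsum_le : ∑ p ∈ M, ((p ∩ Px).card + (p ∩ Py).card) ≤ 2 * u := by
          calc ∑ p ∈ M, ((p ∩ Px).card + (p ∩ Py).card) ≤ ∑ _p ∈ M, 2 :=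
                Finset.sum_le_sum (fun p hp => by have := hc p hp; omega)
          _ = 2 * u := by rw [Finset.sum_const, hMcard, smul_eq_mul, Nat.mul_comm]
        have hsum_eq : ∑ p ∈ M, ((p ∩ Px).card + (p ∩ Py).card) = Px.card + Py.card := by
          rw [Finset.sum_add_distrib, hsumP Px hPxcov, hsumP Py hPycov]
        omega
      obtain ⟨e, heM, h3e⟩ := hkey
      obtain ⟨hesub, hecard, _⟩ := hMmem e heM
      obtain ⟨a, b, hab, rfl⟩ := Finset.card_eq_two.1 hecard
      rw [inter_pair_card hab Px, inter_pair_card hab Py] at h3e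
      have hcc : (a ∈ Px ∧ b ∈ Py) ∨ (b ∈ Px ∧ a ∈ Py) := by
        split_ifs at h3e with h1 h2 h3' h4 h5 h6 h7 h8 h9 h10 h11 h12 h13 h14 <;>
          first | omega | tauto
      obtain ⟨c, c', hcPx, hc'Py, hcE, hc'E, hne⟩ :
          ∃ c c', c ∈ Px ∧ c' ∈ Py ∧ c ∈ ({a, b} : Finset Vt) ∧
            c' ∈ ({a, b} : Finset Vt) ∧ c ≠ c' := by
        rcases hcc with ⟨h1, h2⟩ | ⟨h1, h2⟩
        · exact ⟨a, b, h1, h2, by simp, by simp, hab⟩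
        · exact ⟨b, a, h1, h2, by simp, by simp, hab.symm⟩
      obtain ⟨hcR, hcx, hcnb⟩ := Finset.mem_filter.1 hcPx
      obtain ⟨hc'R, hc'y, hc'nb⟩ := Finset.mem_filter.1 hc'Py
      have hccov : c ∈ covered := hmemcov _ heM c hcE
      have hc'cov : c' ∈ covered := hmemcov _ heM c' hc'E
      have hxc' : x ≠ c' := fun h => hxnc (h ▸ hc'cov)
      have hyc : y ≠ c := fun h => hync (h ▸ hccov)
      -- new matching
      have hu1 : 1 ≤ u := by omega
      set M0 := M.erase {a, b} with hM0def
      have hM0 : ∀ q ∈ M0, q ∈ M ∧ q ≠ ({a, b} : Finset Vt) := by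
        intro q hq
        have h := Finset.mem_erase.1 hq
        exact ⟨h.2, h.1⟩
      have hM0cov : ∀ q ∈ M0, ∀ z ∈ q, z ∈ covered := by
        intro q hq z hz; exact hmemcov q (hM0 q hq).1 z hz
      have hM0dise : ∀ q ∈ M0, Disjoint q ({a, b} : Finset Vt) := by
        intro q hq
        exact hdisj' q (hM0 q hq).1 _ heM (hM0 q hq).2
      have hp1 : ({y, c'} : Finset Vt) ∉ M0 := by
        intro h
        exact hync (hM0cov _ h y (by simp))
      have hp2 : ({x, c} : Finset Vt) ∉ insert ({y, c'} : Finset Vt) M0 := by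
        intro h
        rcases Finset.mem_insert.1 h with h | h
        · have : x ∈ ({y, c'} : Finset Vt) := h ▸ (by simp : x ∈ ({x, c} : Finset Vt))
          rcases Finset.mem_insert.1 this with h' | h'
          · exact hxy h'
          · exact hxc' (Finset.mem_singleton.1 h')
        · exact hxnc (hM0cov _ h x (by simp))
      refine ⟨insert {x, c} (insert {y, c'} M0), ?_, ?_, ?_⟩
      · rw [Finset.card_insert_of_notMem hp2, Finset.card_insert_of_notMem hp1,
          hM0def, Finset.card_erase_of_mem heM, hMcard]
        omega
      · intro p hp
        rcases Finset.mem_insert.1 hp with rfl | hp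
        · refine ⟨?_, Finset.card_pair (fun h => hxnc (h ▸ hccov)), ?_⟩
          · intro z hz
            rcases Finset.mem_insert.1 hz with rfl | hz
            · exact hxR
            · rw [Finset.mem_singleton.1 hz]; exact hcR
          · exact hcnb
        rcases Finset.mem_insert.1 hp with rfl | hp
        · refine ⟨?_, Finset.card_pair (fun h => hync (h ▸ hc'cov)), ?_⟩
          · intro z hz
            rcases Finset.mem_insert.1 hz with rfl | hz
            · exact hyR
            · rw [Finset.mem_singleton.1 hz]; exact hc'R
          · exact hc'nb
        · exact hMmem p (hM0 p hp).1
      · -- pairwise disjointness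
        have hbase : (M0 : Set (Finset Vt)).PairwiseDisjoint id :=
          hMdisj.subset (by intro q hq; exact Finset.mem_coe.2 (hM0 q (Finset.mem_coe.1 hq)).1)
        have hstep1 : ((insert ({y, c'} : Finset Vt) M0 : Finset (Finset Vt)) :
            Set (Finset Vt)).PairwiseDisjoint id := by
          rw [Finset.coe_insert]
          refine hbase.insert ?_
          intro q hq _
          refine Finset.disjoint_left.2 ?_
          intro z hz hzq
          have hq' := Finset.mem_coe.1 hq
          rcases Finset.mem_insert.1 hz with rfl | hz
          · exact hync (hM0cov _ hq' z hzq)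
          · rw [Finset.mem_singleton.1 hz] at hzq
            exact Finset.disjoint_left.1 (hM0dise q hq') hzq hc'E
        rw [Finset.coe_insert]
        refine hstep1.insert ?_
        intro q hq _
        refine Finset.disjoint_left.2 ?_
        intro z hz hzq
        have hq' := Finset.mem_coe.1 hq
        rcases Finset.mem_insert.1 hz with rfl | hz
        · -- z = x
          rcases Finset.mem_insert.1 hq' with rfl | hq''
          · rcases Finset.mem_insert.1 hzq with h | h
            · exact hxy h
            · exact hxc' (Finset.mem_singleton.1 h)
          · exact hxnc (hM0cov _ hq'' z hzq)
        · -- z = c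
          have hz' := Finset.mem_singleton.1 hz
          subst hz'
          rcases Finset.mem_insert.1 hq' with rfl | hq''
          · rcases Finset.mem_insert.1 hzq with h | h
            · exact hyc h.symm
            · exact hne (Finset.mem_singleton.1 h)
          · exact Finset.disjoint_left.1 (hM0dise q hq'') hzq hcE

/-- potential function -/
noncomputable def Phi (W' : Finset Vt) (H : Finset (Finset Vt))
    (C : Finset (Finset Vt)) : ℝ :=
  ∑ w ∈ W', (2 : ℝ) ^ ((C.filter (fun p => insert w p ∉ H)).card)

lemma Phi_nonneg (W' : Finset Vt) (H C : Finset (Finset Vt)) : 0 ≤ Phi W' H C :=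
  Finset.sum_nonneg (fun w _ => by positivity)

lemma le_Phi (W' : Finset Vt) (H C : Finset (Finset Vt)) {w : Vt} (hw : w ∈ W') :
    (2 : ℝ) ^ ((C.filter (fun p => insert w p ∉ H)).card) ≤ Phi W' H C :=
  Finset.single_le_sum (f := fun w => (2 : ℝ) ^ ((C.filter (fun p => insert w p ∉ H)).card))
    (fun w _ => by positivity) hw

lemma Phi_insert (W' : Finset Vt) (H : Finset (Finset Vt)) (C : Finset (Finset Vt))
    (p : Finset Vt) (hp : p ∉ C) :
    Phi W' H (insert p C) =
      Phi W' H C + ∑ w ∈ W', (if insert w p ∉ H then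
        (2:ℝ) ^ ((C.filter (fun q => insert w q ∉ H)).card) else 0) := by
  rw [Phi, Phi, ← Finset.sum_add_distrib]
  refine Finset.sum_congr rfl ?_
  intro w _
  by_cases h : insert w p ∉ H
  · rw [Finset.filter_insert, if_pos h, Finset.card_insert_of_notMem
      (fun hc => hp (Finset.mem_filter.1 hc).1), if_pos h]
    ring
  · rw [Finset.filter_insert, if_neg h, if_neg h]
    ring

set_option maxHeartbeats 1000000 in
theorem stage1 (W' : Finset Vt) (V0 : Finset Vt) (H : Finset (Finset Vt))
    (Bad : Finset Vt → Prop) [DecidablePred Bad] (A : ℝ) (hA : 0 ≤ A) (Δ f₀ : ℕ)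
    (hf₀ : 3 ≤ f₀)
    (hdeg : ∀ x ∈ V0, (V0.filter fun y => y ≠ x ∧ Bad {x, y}).card ≤ Δ)
    (hmiss : ∀ w ∈ W', (((V0.powersetCard 2).filter
        (fun p => insert w p ∉ H)).card : ℝ) ≤ A)
    (hΔ : 4 * Δ + 1 ≤ f₀ + 2) :
    ∀ (k : ℕ) (F : Finset Vt) (C : Finset (Finset Vt)),
      F ⊆ V0 →
      f₀ + 2 * k ≤ F.card →
      (∀ p ∈ C, p ⊆ V0 ∧ p.card = 2 ∧ ¬ Bad p ∧ Disjoint p F) →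
      (C : Set (Finset Vt)).PairwiseDisjoint id →
      ∃ C' F', C ⊆ C' ∧ C'.card = C.card + k ∧ F' ⊆ F ∧ F'.card = F.card - 2 * k ∧
        (∀ p ∈ C', p ⊆ V0 ∧ p.card = 2 ∧ ¬ Bad p ∧ Disjoint p F') ∧
        (C' : Set (Finset Vt)).PairwiseDisjoint id ∧
        Phi W' H C' ≤ Phi W' H C *
          Real.exp (2*A/((F.card : ℝ) - 2*k) - 2*A/(F.card : ℝ)) := by
  intro k
  induction k with
  | zero =>
    intro F C hFV hFcard hC hCd
    refine ⟨C, F, subset_rfl, by omega, subset_rfl, by omega, hC, hCd, ?_⟩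
    norm_num
  | succ k ih =>
    intro F C hFV hFcard hC hCd
    classical
    set f := F.card with hfdef
    have hf2 : f₀ + 2 * k + 2 ≤ f := by omega
    -- candidate pairs
    set S := (F.powersetCard 2).filter (fun p => ¬ Bad p) with hSdef
    have hSmem : ∀ p ∈ S, p ⊆ F ∧ p.card = 2 ∧ ¬ Bad p := by
      intro p hp
      obtain ⟨h1, h2⟩ := Finset.mem_filter.1 hp
      obtain ⟨h3, h4⟩ := Finset.mem_powersetCard.1 h1
      exact ⟨h3, h4, h2⟩
    -- bad pairs are few
    have hbadcount : ((F.powersetCard 2).filter (fun p => Bad p)).card ≤ f * Δ := by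
      have hsurj : Set.SurjOn (fun q : (_ : Vt) × Vt => ({q.1, q.2} : Finset Vt))
          (F.sigma (fun x => F.filter (fun y => y ≠ x ∧ Bad {x, y})) : Set ((_ : Vt) × Vt))
          ((F.powersetCard 2).filter (fun p => Bad p) : Set (Finset Vt)) := by
        intro p hp
        obtain ⟨h1, h2⟩ := Finset.mem_filter.1 (Finset.mem_coe.1 hp)
        obtain ⟨hsub, hcard2⟩ := Finset.mem_powersetCard.1 h1
        obtain ⟨x, y, hxy, rfl⟩ := Finset.card_eq_two.1 hcard2
        refine ⟨⟨x, y⟩, ?_, rfl⟩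
        refine Finset.mem_coe.2 (Finset.mem_sigma.2 ⟨hsub (by simp), ?_⟩)
        exact Finset.mem_filter.2 ⟨hsub (by simp), hxy.symm, h2⟩
      have h1 := Finset.card_le_card_of_surjOn _ hsurj
      have h2 : (F.sigma (fun x => F.filter (fun y => y ≠ x ∧ Bad {x, y}))).card ≤ f * Δ := by
        rw [Finset.card_sigma]
        calc ∑ x ∈ F, (F.filter (fun y => y ≠ x ∧ Bad {x, y})).card
            ≤ ∑ _x ∈ F, Δ := Finset.sum_le_sum (fun x hx =>
              (Finset.card_le_card (Finset.filter_subset_filter _ (hFV))).trans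
                (hdeg x (hFV hx)))
          _ = f * Δ := by rw [Finset.sum_const, smul_eq_mul]
      omega
    have hScard : ((f : ℝ) * ((f : ℝ) - 1)) / 4 ≤ (S.card : ℝ) := by
      have hsplit : (F.powersetCard 2).card = S.card +
          ((F.powersetCard 2).filter (fun p => Bad p)).card := by
        rw [hSdef]
        rw [← Finset.card_filter_add_card_filter_not
          (s := F.powersetCard 2) (p := fun p => Bad p)]
        omega
      have hchoose : ((F.powersetCard 2).card : ℝ) = (f : ℝ) * ((f : ℝ) - 1) / 2 := by
        rw [Finset.card_powersetCard, ← hfdef, Nat.cast_choose_two]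
      have hbad' : (((F.powersetCard 2).filter (fun p => Bad p)).card : ℝ) ≤ (f:ℝ) * Δ := by
        exact_mod_cast hbadcount
      have hΔf : 4 * (Δ:ℝ) + 1 ≤ (f : ℝ) := by
        have : 4 * Δ + 1 ≤ f := by omega
        exact_mod_cast this
      have hf0 : (0:ℝ) ≤ (f:ℝ) := by positivity
      have := hsplit
      have hcast : ((F.powersetCard 2).card : ℝ) = (S.card : ℝ) +
          (((F.powersetCard 2).filter (fun p => Bad p)).card : ℝ) := by exact_mod_cast this
      nlinarith [hcast, hchoose, hbad']
    have hfpos : (0:ℝ) < (f:ℝ) * ((f:ℝ) - 1) / 4 := by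
      have h5 : 5 ≤ f := by omega
      have : (5:ℝ) ≤ (f:ℝ) := by exact_mod_cast h5
      nlinarith
    have hSne : S.Nonempty := by
      rw [← Finset.card_pos]
      have h0 : (0:ℝ) < (S.card : ℝ) := lt_of_lt_of_le hfpos hScard
      exact_mod_cast h0
    -- averaging
    set cw : Vt → ℝ := fun w => (2:ℝ) ^ ((C.filter (fun q => insert w q ∉ H)).card)
      with hcwdef
    set g : Finset Vt → ℝ := fun p => ∑ w ∈ W',
      (if insert w p ∉ H then cw w else 0) with hgdef
    have hcwpos : ∀ w, 0 ≤ cw w := fun w => by rw [hcwdef]; positivity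
    have hsumg : ∑ p ∈ S, g p ≤ Phi W' H C * A := by
      rw [hgdef, Finset.sum_comm]
      have hper : ∀ w ∈ W', ∑ p ∈ S, (if insert w p ∉ H then cw w else 0)
          ≤ cw w * A := by
        intro w hw
        rw [← Finset.sum_filter]
        rw [Finset.sum_const, nsmul_eq_mul]
        have hsub : S.filter (fun p => insert w p ∉ H) ⊆
            (V0.powersetCard 2).filter (fun p => insert w p ∉ H) := by
          apply Finset.filter_subset_filter
          rw [hSdef]
          intro p hp
          obtain ⟨h1, _⟩ := Finset.mem_filter.1 hp
          obtain ⟨h3, h4⟩ := Finset.mem_powersetCard.1 h1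
          exact Finset.mem_powersetCard.2 ⟨h3.trans hFV, h4⟩
        have hcard : ((S.filter (fun p => insert w p ∉ H)).card : ℝ) ≤ A :=
          le_trans (by exact_mod_cast Finset.card_le_card hsub) (hmiss w hw)
        calc ((S.filter (fun p => insert w p ∉ H)).card : ℝ) * cw w
            ≤ A * cw w := by
              apply mul_le_mul_of_nonneg_right hcard (hcwpos w)
          _ = cw w * A := by ring
      calc ∑ w ∈ W', ∑ p ∈ S, (if insert w p ∉ H then cw w else 0)
          ≤ ∑ w ∈ W', cw w * A := Finset.sum_le_sum hper
        _ = Phi W' H C * A := by rw [← Finset.sum_mul]; rfl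
    have hSpos : (0:ℝ) < (S.card : ℝ) := lt_of_lt_of_le hfpos hScard
    have hexists : ∃ p ∈ S, g p ≤ Phi W' H C * A / (S.card : ℝ) := by
      apply Finset.exists_le_of_sum_le hSne
      rw [Finset.sum_const, nsmul_eq_mul]
      have heq : (S.card:ℝ) * (Phi W' H C * A / (S.card:ℝ)) = Phi W' H C * A := by
        field_simp
      rw [heq]
      exact hsumg
    obtain ⟨p, hpS, hgp⟩ := hexists
    obtain ⟨hpF, hpcard, hpnb⟩ := hSmem p hpS
    have hpV0 : p ⊆ V0 := hpF.trans hFV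
    have hpne : p.Nonempty := by
      rw [← Finset.card_pos, hpcard]; omega
    have hpC : p ∉ C := by
      intro hc
      obtain ⟨z, hz⟩ := hpne
      exact Finset.disjoint_left.1 (hC p hc).2.2.2 hz (hpF hz)
    -- new potential bound
    have hfR5 : (5:ℝ) ≤ (f:ℝ) := by exact_mod_cast (by omega : 5 ≤ f)
    have hXpos : (0:ℝ) < (f:ℝ) * ((f:ℝ) - 1) := by nlinarith
    have hq4 : Phi W' H C * A / (S.card : ℝ) ≤
        Phi W' H C * (4 * A / ((f:ℝ) * ((f:ℝ) - 1))) := by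
      rw [mul_div_assoc]
      apply mul_le_mul_of_nonneg_left _ (Phi_nonneg W' H C)
      have h1 : A / (S.card : ℝ) ≤ A / ((f:ℝ) * ((f:ℝ) - 1) / 4) := by
        gcongr
      calc A / (S.card : ℝ) ≤ A / ((f:ℝ) * ((f:ℝ) - 1) / 4) := h1
        _ = 4 * A / ((f:ℝ) * ((f:ℝ) - 1)) := by
            rw [div_div_eq_mul_div]
            ring
    have hPhiIns : Phi W' H (insert p C) ≤
        Phi W' H C * (1 + 4 * A / ((f:ℝ) * ((f:ℝ) - 1))) := by
      rw [Phi_insert W' H C p hpC]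
      have : (∑ w ∈ W', (if insert w p ∉ H then cw w else 0)) = g p := rfl
      rw [this]
      calc Phi W' H C + g p ≤ Phi W' H C + Phi W' H C * (4 * A / ((f:ℝ) * ((f:ℝ) - 1))) :=
            by linarith [hgp.trans hq4]
        _ = Phi W' H C * (1 + 4 * A / ((f:ℝ) * ((f:ℝ) - 1))) := by ring
    -- recurse
    have hrec := ih (F \ p) (insert p C) (Finset.sdiff_subset.trans hFV)
      (by rw [Finset.card_sdiff_of_subset hpF, hpcard]; omega)
      (by
        intro q hq
        rcases Finset.mem_insert.1 hq with rfl | hq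
        · exact ⟨hpV0, hpcard, hpnb, disjoint_sdiff_self_right⟩
        · obtain ⟨h1, h2, h3, h4⟩ := hC q hq
          exact ⟨h1, h2, h3, h4.mono_right Finset.sdiff_subset⟩)
      (by
        rw [Finset.coe_insert]
        refine hCd.insert ?_
        intro q hq _
        refine Finset.disjoint_left.2 ?_
        intro z hz hzq
        exact Finset.disjoint_left.1 (hC q (Finset.mem_coe.1 hq)).2.2.2 hzq (hpF hz))
    obtain ⟨C', F'', hCC', hC'card, hF''sub, hF''card, hC'props, hC'disj, hC'Phi⟩ := hrec
    have hFp : (F \ p).card = f - 2 := by rw [Finset.card_sdiff_of_subset hpF, hpcard]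
    refine ⟨C', F'', (Finset.subset_insert p C).trans hCC', ?_, hF''sub.trans
      Finset.sdiff_subset, ?_, hC'props, hC'disj, ?_⟩
    · rw [hC'card, Finset.card_insert_of_notMem hpC]; omega
    · omega
    · -- potential chain
      have hfR : (5:ℝ) ≤ (f:ℝ) := by exact_mod_cast (by omega : 5 ≤ f)
      have hkR : 2 * (k:ℝ) + 5 ≤ (f:ℝ) := by exact_mod_cast (by omega : 2*k+5 ≤ f)
      have hcast : ((F \ p).card : ℝ) = (f:ℝ) - 2 := by
        rw [hFp]
        have : 2 ≤ f := by omega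
        push_cast [this]
        ring
      rw [hcast] at hC'Phi
      set q1 : ℝ := 4 * A / ((f:ℝ) * ((f:ℝ) - 1)) with hq1def
      set E2 : ℝ := 2*A/((f:ℝ) - 2 - 2*(k:ℕ)) - 2*A/((f:ℝ) - 2) with hE2def
      have hexpE2pos : 0 ≤ Real.exp E2 := le_of_lt (Real.exp_pos _)
      have hchain1 : Phi W' H C' ≤ (Phi W' H C * (1 + q1)) * Real.exp E2 := by
        calc Phi W' H C' ≤ Phi W' H (insert p C) * Real.exp E2 := hC'Phi
          _ ≤ (Phi W' H C * (1 + q1)) * Real.exp E2 :=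
              mul_le_mul_of_nonneg_right hPhiIns hexpE2pos
      have h1q : 1 + q1 ≤ Real.exp q1 := by
        have := Real.add_one_le_exp q1
        linarith
      have hq1nn : 0 ≤ q1 := by
        rw [hq1def]
        exact div_nonneg (by linarith) (le_of_lt hXpos)
      have hchain2 : Phi W' H C' ≤ Phi W' H C * Real.exp (q1 + E2) := by
        rw [Real.exp_add]
        calc Phi W' H C' ≤ (Phi W' H C * (1 + q1)) * Real.exp E2 := hchain1
          _ ≤ (Phi W' H C * Real.exp q1) * Real.exp E2 := by
              apply mul_le_mul_of_nonneg_right _ hexpE2pos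
              exact mul_le_mul_of_nonneg_left h1q (Phi_nonneg W' H C)
          _ = Phi W' H C * (Real.exp q1 * Real.exp E2) := by ring
      refine hchain2.trans ?_
      apply mul_le_mul_of_nonneg_left _ (Phi_nonneg W' H C)
      apply Real.exp_le_exp.2
      -- q1 + E2 ≤ 2A/(f - 2(k+1)) - 2A/f
      rw [hq1def, hE2def]
      have hb1 : (0:ℝ) < (f:ℝ) - 2 - 2*(k:ℕ) := by
        push_cast
        linarith [hkR]
      have hb2 : (0:ℝ) < (f:ℝ) - 2 := by linarith [hfR]
      have hb3 : (0:ℝ) < (f:ℝ) - 1 := by linarith [hfR]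
      have hb4 : (0:ℝ) < (f:ℝ) := by linarith [hfR]
      have hkey : 4 * A / ((f:ℝ) * ((f:ℝ) - 1)) ≤ 2*A/((f:ℝ) - 2) - 2*A/(f:ℝ) := by
        have heq : 2*A/((f:ℝ) - 2) - 2*A/(f:ℝ) = 4 * A / ((f:ℝ) * ((f:ℝ) - 2)) := by
          rw [div_sub_div _ _ (ne_of_gt hb2) (ne_of_gt hb4)]
          rw [mul_comm ((f:ℝ) - 2) (f:ℝ)]
          congr 1
          ring
        rw [heq]
        exact div_le_div_of_nonneg_left (by linarith) (by nlinarith) (by nlinarith)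
      have hgoal : 4 * A / ((f:ℝ) * ((f:ℝ) - 1)) + (2*A/((f:ℝ) - 2 - 2*(k:ℕ)) - 2*A/((f:ℝ) - 2))
          ≤ 2*A/((f:ℝ) - 2*((k:ℝ)+1)) - 2*A/(f:ℝ) := by
        have : (f:ℝ) - 2*((k:ℝ)+1) = (f:ℝ) - 2 - 2*(k:ℕ) := by push_cast; ring
        rw [this]
        linarith [hkey]
      calc 4 * A / ((f:ℝ) * ((f:ℝ) - 1)) + (2*A/((f:ℝ) - 2 - 2*(k:ℕ)) - 2*A/((f:ℝ) - 2))
          ≤ 2*A/((f:ℝ) - 2*((k:ℝ)+1)) - 2*A/(f:ℝ) := hgoal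
        _ = 2*A/((f:ℝ) - 2*((k+1 : ℕ):ℝ)) - 2*A/(f:ℝ) := by push_cast; ring

lemma Phi_empty' (W' : Finset Vt) (H : Finset (Finset Vt)) :
    Phi W' H (∅ : Finset (Finset Vt)) = (W'.card : ℝ) := by
  rw [Phi]
  rw [Finset.sum_congr rfl (fun w _ => by rw [Finset.filter_empty, Finset.card_empty, pow_zero])]
  rw [Finset.sum_const, nsmul_eq_mul, mul_one]

theorem hall_finish (V W : Finset Vt) (H : Finset (Finset Vt)) (hdisj : Disjoint V W)
    (d : ℕ) (hW : W.card = d) (C : Finset (Finset Vt)) (hCcard : C.card = d)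
    (hCp : ∀ p ∈ C, p ⊆ V ∧ p.card = 2)
    (hCd : (C : Set (Finset Vt)).PairwiseDisjoint id)
    (hallA : ∀ w ∈ W, ((C.filter fun p => insert w p ∉ H).card : ℝ) < 3*(d:ℝ)/4)
    (hallB : ∀ p ∈ C, (((W.filter fun w => insert w p ∉ H).card : ℝ)) ≤ (d:ℝ)/4) :
    ∃ M ⊆ H, (M : Set (Finset Vt)).PairwiseDisjoint id ∧ M.card = d := by
  classical
  set t : {w // w ∈ W} → Finset (Finset Vt) :=
    fun w => C.filter (fun p => insert w.1 p ∈ H) with htdef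
  have hVW : ∀ x ∈ V, x ∉ W := fun x hx hw => Finset.disjoint_left.1 hdisj hx hw
  have hhall : ∀ s : Finset {w // w ∈ W}, s.card ≤ (s.biUnion t).card := by
    intro s
    rcases Finset.eq_empty_or_nonempty s with rfl | ⟨w₀, hw₀⟩
    · simp
    have htcard : ∀ w : {w // w ∈ W}, (t w).card + (C.filter
        (fun p => insert w.1 p ∉ H)).card = d := by
      intro w
      rw [htdef]
      rw [Finset.card_filter_add_card_filter_not (p := fun p => insert w.1 p ∈ H)]
      exact hCcard
    by_cases hs : (s.card : ℝ) ≤ (d:ℝ)/4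
    · have h1 : ((t w₀).card : ℝ) > (d:ℝ)/4 := by
        have h2 := hallA w₀.1 w₀.2
        have h3 := htcard w₀
        have h4 : ((t w₀).card : ℝ) + ((C.filter (fun p => insert w₀.1 p ∉ H)).card : ℝ)
            = (d:ℝ) := by exact_mod_cast h3
        linarith
      have h5 : s.card ≤ (t w₀).card := by
        have : (s.card : ℝ) ≤ ((t w₀).card : ℝ) := by linarith
        exact_mod_cast this
      exact h5.trans (Finset.card_le_card (Finset.subset_biUnion_of_mem t hw₀))
    · push_neg at hs
      have hCsub : C ⊆ s.biUnion t := by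
        intro p hp
        by_contra hc
        have hnot : ∀ w ∈ s, insert w.1 p ∉ H := by
          intro w hw
          intro hmem
          exact hc (Finset.mem_biUnion.2 ⟨w, hw, Finset.mem_filter.2 ⟨hp, hmem⟩⟩)
        have himg : s.image Subtype.val ⊆ W.filter (fun w => insert w p ∉ H) := by
          intro w hw
          obtain ⟨w', hw', rfl⟩ := Finset.mem_image.1 hw
          exact Finset.mem_filter.2 ⟨w'.2, hnot w' hw'⟩
        have hcard1 : s.card = (s.image Subtype.val).card :=
          (Finset.card_image_of_injective s Subtype.val_injective).symm
        have hcard2 := Finset.card_le_card himg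
        have := hallB p hp
        have hfin : (s.card : ℝ) ≤ (d:ℝ)/4 := by
          rw [hcard1]
          calc ((s.image Subtype.val).card : ℝ)
              ≤ ((W.filter (fun w => insert w p ∉ H)).card : ℝ) := by exact_mod_cast hcard2
            _ ≤ (d:ℝ)/4 := this
        linarith
      have h6 : s.card ≤ d := by
        calc s.card ≤ (Finset.univ : Finset {w // w ∈ W}).card := Finset.card_le_univ s
          _ = W.card := by rw [Finset.card_univ, Fintype.card_coe]
          _ = d := hW
      calc s.card ≤ d := h6
        _ = C.card := hCcard.symm
        _ ≤ (s.biUnion t).card := Finset.card_le_card hCsub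
  obtain ⟨f, hfinj, hft⟩ := (Finset.all_card_le_biUnion_card_iff_exists_injective t).1 hhall
  have hfC : ∀ w, f w ∈ C ∧ insert w.1 (f w) ∈ H := by
    intro w
    have := hft w
    rw [htdef] at this
    exact ⟨(Finset.mem_filter.1 this).1, (Finset.mem_filter.1 this).2⟩
  have hfV : ∀ w, f w ⊆ V := fun w => (hCp _ (hfC w).1).1
  have hwnotin : ∀ (w w' : {w // w ∈ W}), w.1 ∉ f w' := by
    intro w w' h
    exact hVW w.1 (hfV w' h) w.2
  set em : {w // w ∈ W} → Finset Vt := fun w => insert w.1 (f w) with hemdef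
  have hinj : Set.InjOn em (Finset.univ : Finset {w // w ∈ W}) := by
    intro w _ w' _ heq
    have hww' : w.1 = w'.1 := by
      have h1 : (w.1 : Vt) ∈ em w' := by
        rw [← heq, hemdef]
        exact Finset.mem_insert_self _ _
      rw [hemdef] at h1
      rcases Finset.mem_insert.1 h1 with h | h
      · exact h
      · exact absurd h (hwnotin w w')
    have hw : w = w' := Subtype.ext hww'
    exact hw
  refine ⟨Finset.univ.image em, ?_, ?_, ?_⟩
  · intro e he
    obtain ⟨w, _, rfl⟩ := Finset.mem_image.1 he
    exact (hfC w).2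
  · -- pairwise disjoint
    intro e he e' he' hee
    obtain ⟨w, _, rfl⟩ := Finset.mem_image.1 (Finset.mem_coe.1 he)
    obtain ⟨w', _, rfl⟩ := Finset.mem_image.1 (Finset.mem_coe.1 he')
    have hww : w ≠ w' := fun h => hee (by rw [h])
    have hffne : f w ≠ f w' := fun h => hww (hfinj h)
    have hdisjf : Disjoint (f w) (f w') :=
      hCd (Finset.mem_coe.2 (hfC w).1) (Finset.mem_coe.2 (hfC w').1) hffne
    refine Finset.disjoint_left.2 ?_
    intro z hz hz'
    rw [hemdef] at hz hz'
    rcases Finset.mem_insert.1 hz with rfl | hz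
    · rcases Finset.mem_insert.1 hz' with h | h
      · exact hww (Subtype.ext h)
      · exact hwnotin w w' h
    · rcases Finset.mem_insert.1 hz' with rfl | hz'
      · exact hwnotin w' w hz
      · exact Finset.disjoint_left.1 hdisjf hz hz'
  · rw [Finset.card_image_of_injOn hinj, Finset.card_univ, Fintype.card_coe, hW]

/-- The count of missing pairs for `w` is at most the number of missing `H_{n,d}` edges
containing `w`. -/
lemma missW_bound (V W : Finset Vt) (H : Finset (Finset Vt)) (hdisj : Disjoint V W)
    {w : Vt} (hw : w ∈ W) :
    ((V.powersetCard 2).filter (fun p => insert w p ∉ H)).card ≤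
      (((Finset.univ : Finset (Finset Vt)).filter (fun e =>
          e.card = 3 ∧ ((e ∩ W).card = 1 ∨ (e ∩ W).card = 2)) \ H).filter
          (fun e => w ∈ e)).card := by
  classical
  apply Finset.card_le_card_of_injOn (fun p => insert w p)
  · intro p hp
    obtain ⟨h1, h2⟩ := Finset.mem_filter.1 hp
    obtain ⟨hsub, hcard2⟩ := Finset.mem_powersetCard.1 h1
    have hwp : w ∉ p := fun h => Finset.disjoint_left.1 hdisj (hsub h) hw
    refine Finset.mem_filter.2 ⟨Finset.mem_sdiff.2 ⟨Finset.mem_filter.2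
      ⟨Finset.mem_univ _, ?_, ?_⟩, h2⟩, Finset.mem_insert_self _ _⟩
    · rw [Finset.card_insert_of_notMem hwp, hcard2]
    · left
      have hiW : insert w p ∩ W = {w} := by
        ext z
        simp only [Finset.mem_inter, Finset.mem_insert, Finset.mem_singleton]
        constructor
        · rintro ⟨hz1 | hz2, hzW⟩
          · exact hz1
          · exact absurd hzW (Finset.disjoint_left.1 hdisj (hsub hz2))
        · rintro rfl
          exact ⟨Or.inl rfl, hw⟩
      rw [hiW, Finset.card_singleton]
  · intro p hp q hq heq
    obtain ⟨h1, _⟩ := Finset.mem_filter.1 (Finset.mem_coe.1 hp)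
    obtain ⟨h1', _⟩ := Finset.mem_filter.1 (Finset.mem_coe.1 hq)
    obtain ⟨hsub, _⟩ := Finset.mem_powersetCard.1 h1
    obtain ⟨hsub', _⟩ := Finset.mem_powersetCard.1 h1'
    have hwp : w ∉ p := fun h => Finset.disjoint_left.1 hdisj (hsub h) hw
    have hwq : w ∉ q := fun h => Finset.disjoint_left.1 hdisj (hsub' h) hw
    have := congrArg (fun s => Finset.erase s w) heq
    simpa [Finset.erase_insert hwp, Finset.erase_insert hwq] using this

/-- Degree bound for heavy pairs at a vertex `x ∈ V`. -/
lemma heavy_deg_bound (V W : Finset Vt) (H : Finset (Finset Vt)) (hdisj : Disjoint V W)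
    (d : ℕ) {x : Vt} (hx : x ∈ V) :
    ((V.filter (fun y => y ≠ x ∧ d < 4 * (W.filter (fun w =>
        insert w {x, y} ∉ H)).card)).card) * (d + 1) ≤
      4 * (((Finset.univ : Finset (Finset Vt)).filter (fun e =>
          e.card = 3 ∧ ((e ∩ W).card = 1 ∨ (e ∩ W).card = 2)) \ H).filter
          (fun e => x ∈ e)).card := by
  classical
  set hs := V.filter (fun y => y ≠ x ∧ d < 4 * (W.filter (fun w =>
      insert w {x, y} ∉ H)).card) with hhs
  set N := hs.sigma (fun y => W.filter (fun w => insert w {x, y} ∉ H)) with hN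
  have hNcard : N.card = ∑ y ∈ hs, (W.filter (fun w => insert w {x, y} ∉ H)).card :=
    Finset.card_sigma _ _
  have h1 : hs.card * (d + 1) ≤ 4 * N.card := by
    rw [hNcard, Finset.mul_sum]
    calc hs.card * (d + 1) = ∑ _y ∈ hs, (d + 1) := by
          rw [Finset.sum_const, smul_eq_mul]
      _ ≤ ∑ y ∈ hs, 4 * (W.filter (fun w => insert w {x, y} ∉ H)).card := by
          apply Finset.sum_le_sum
          intro y hy
          have := (Finset.mem_filter.1 hy).2.2
          omega
  have h2 : N.card ≤ (((Finset.univ : Finset (Finset Vt)).filter (fun e =>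
      e.card = 3 ∧ ((e ∩ W).card = 1 ∨ (e ∩ W).card = 2)) \ H).filter
      (fun e => x ∈ e)).card := by
    apply Finset.card_le_card_of_injOn (fun q => insert q.2 {x, q.1})
    · rintro ⟨y, w⟩ hq
      obtain ⟨hy, hw'⟩ := Finset.mem_sigma.1 hq
      obtain ⟨hyV, hyx, _⟩ := Finset.mem_filter.1 hy
      obtain ⟨hwW, hnH⟩ := Finset.mem_filter.1 hw'
      have hwxy : w ∉ ({x, y} : Finset Vt) := by
        intro h
        rcases Finset.mem_insert.1 h with rfl | h
        · exact Finset.disjoint_left.1 hdisj hx hwW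
        · rw [Finset.mem_singleton.1 h] at hwW
          exact Finset.disjoint_left.1 hdisj hyV hwW
      refine Finset.mem_filter.2 ⟨Finset.mem_sdiff.2 ⟨Finset.mem_filter.2
        ⟨Finset.mem_univ _, ?_, ?_⟩, hnH⟩, ?_⟩
      · rw [Finset.card_insert_of_notMem hwxy, Finset.card_pair (Ne.symm hyx)]
      · left
        have hiW : insert w ({x, y} : Finset Vt) ∩ W = {w} := by
          ext z
          simp only [Finset.mem_inter, Finset.mem_insert, Finset.mem_singleton]
          constructor
          · rintro ⟨rfl | (rfl | rfl), hzW⟩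
            · rfl
            · exact absurd hzW (Finset.disjoint_left.1 hdisj hx)
            · exact absurd hzW (Finset.disjoint_left.1 hdisj hyV)
          · rintro rfl
            exact ⟨Or.inl rfl, hwW⟩
        rw [hiW, Finset.card_singleton]
      · exact Finset.mem_insert.2 (Or.inr (Finset.mem_insert_self _ _))
    · rintro ⟨y, w⟩ hq ⟨y', w'⟩ hq' heq
      simp only at heq
      obtain ⟨hy, hw'⟩ := Finset.mem_sigma.1 (Finset.mem_coe.1 hq)
      obtain ⟨hy2, hw2⟩ := Finset.mem_sigma.1 (Finset.mem_coe.1 hq')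
      obtain ⟨hyV, hyx, _⟩ := Finset.mem_filter.1 hy
      obtain ⟨hyV2, hyx2, _⟩ := Finset.mem_filter.1 hy2
      have hwW : w ∈ W := (Finset.mem_filter.1 hw').1
      have hwW2 : w' ∈ W := (Finset.mem_filter.1 hw2).1
      have hww' : w = w' := by
        have h1 : w ∈ insert w' ({x, y'} : Finset Vt) := by
          rw [← heq]; exact Finset.mem_insert_self _ _
        rcases Finset.mem_insert.1 h1 with h | h
        · exact h
        · rcases Finset.mem_insert.1 h with rfl | h
          · exact absurd hwW (fun hc => Finset.disjoint_left.1 hdisj hx hc)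
          · rw [Finset.mem_singleton.1 h] at hwW
            exact absurd hwW (fun hc => Finset.disjoint_left.1 hdisj hyV2 hc)
      subst hww'
      have hxy : ({x, y} : Finset Vt) = {x, y'} := by
        have hwxy : w ∉ ({x, y} : Finset Vt) := by
          intro h
          rcases Finset.mem_insert.1 h with rfl | h
          · exact Finset.disjoint_left.1 hdisj hx hwW
          · rw [Finset.mem_singleton.1 h] at hwW
            exact Finset.disjoint_left.1 hdisj hyV hwW
        have hwxy' : w ∉ ({x, y'} : Finset Vt) := by
          intro h
          rcases Finset.mem_insert.1 h with rfl | h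
          · exact Finset.disjoint_left.1 hdisj hx hwW
          · rw [Finset.mem_singleton.1 h] at hwW
            exact Finset.disjoint_left.1 hdisj hyV2 hwW
        have := congrArg (fun s => Finset.erase s w) heq
        simpa [Finset.erase_insert hwxy, Finset.erase_insert hwxy'] using this
      have hyy : y = y' := by
        have h1 : y ∈ ({x, y'} : Finset Vt) := by
          rw [← hxy]; exact Finset.mem_insert.2 (Or.inr (Finset.mem_singleton_self _))
        rcases Finset.mem_insert.1 h1 with h | h
        · exact absurd h hyx
        · exact Finset.mem_singleton.1 h
      subst hyy
      rfl
  omega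

end S10

set_option maxHeartbeats 2000000 in
/-- Let `0 < α < 10⁻⁶` and `n/150 ≤ d ≤ n/3`. Let `V, W` partition an
`n`-element vertex set with `|W| = d`, and let `H` be a 3-uniform hypergraph on this
vertex set in which every vertex `v` is `α`-good with respect to `H_{n,d}(V,W)` (at most
`αn²` edges of `H_{n,d}(V,W)` containing `v` fail to be edges of `H`). Then `H` contains
a matching of size `d`. -/
theorem stmt_10 (α : ℝ) (hα0 : 0 < α) (hα1 : α < 1/1000000)
    (n d : ℕ) (Vt : Type) [Fintype Vt] [DecidableEq Vt]
    (hcard : Fintype.card Vt = n)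
    (hd1 : (n : ℝ)/150 ≤ (d : ℝ)) (hd2 : (d : ℝ) ≤ (n : ℝ)/3)
    (V W : Finset Vt) (hdisj : Disjoint V W) (hunion : V ∪ W = Finset.univ)
    (hW : W.card = d)
    (H : Finset (Finset Vt)) (h3 : ∀ e ∈ H, e.card = 3)
    (hgood : ∀ v : Vt,
      ((((((Finset.univ : Finset (Finset Vt)).filter fun e =>
          e.card = 3 ∧ ((e ∩ W).card = 1 ∨ (e ∩ W).card = 2)) \ H).filter
          fun e => v ∈ e).card : ℝ) ≤ α * (n : ℝ)^2)) :
    ∃ M ⊆ H, (M : Set (Finset Vt)).PairwiseDisjoint id ∧ M.card = d := by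
  classical
  rcases Nat.eq_zero_or_pos d with hd0 | hdpos
  · exact ⟨∅, Finset.empty_subset _, by simp, by simp [hd0]⟩
  have hn3d : 3 * d ≤ n := by
    have h : (3:ℝ) * (d:ℝ) ≤ (n:ℝ) := by linarith
    exact_mod_cast h
  have hn150 : n ≤ 150 * d := by
    have h : (n:ℝ) ≤ 150 * (d:ℝ) := by linarith
    exact_mod_cast h
  have hdn : d ≤ n := by omega
  have hVcard : V.card = n - d := by
    have h1 : V.card + W.card = n := by
      rw [← Finset.card_union_of_disjoint hdisj, hunion, Finset.card_univ, hcard]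
    omega
  have hnpos : 0 < n := by omega
  have hnposR : (0:ℝ) < (n:ℝ) := by exact_mod_cast hnpos
  have hdposR : (0:ℝ) < (d:ℝ) := by exact_mod_cast hdpos
  set A := α * (n:ℝ)^2 with hAdef
  have hA0 : 0 ≤ A := le_of_lt (mul_pos hα0 (by positivity))
  have hAn : A < (n:ℝ)^2 / 1000000 := by
    rw [hAdef]
    have h2 : (0:ℝ) < (n:ℝ)^2 := by positivity
    calc α * (n:ℝ)^2 < (1/1000000) * (n:ℝ)^2 := mul_lt_mul_of_pos_right hα1 h2
      _ = (n:ℝ)^2/1000000 := by ring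
  have hn150R : (n:ℝ) ≤ 150 * (d:ℝ) := by linarith
  have hn2 : (n:ℝ)^2 ≤ 22500*(d:ℝ)^2 := by
    have h := mul_le_mul hn150R hn150R (le_of_lt hnposR)
      (by positivity : (0:ℝ) ≤ 150*(d:ℝ))
    nlinarith
  -- budgets
  have hmissW : ∀ w ∈ W,
      (((V.powersetCard 2).filter (fun p => insert w p ∉ H)).card : ℝ) ≤ A := by
    intro w hw
    calc (((V.powersetCard 2).filter (fun p => insert w p ∉ H)).card : ℝ)
        ≤ _ := by exact_mod_cast (S10.missW_bound V W H hdisj hw)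
      _ ≤ A := hgood w
  set Δ : ℕ := ⌊4 * A / ((d:ℝ) + 1)⌋₊ with hΔdef
  have hd1R : (0:ℝ) < (d:ℝ) + 1 := by linarith
  have hdegΔ : ∀ x ∈ V, (V.filter (fun y => y ≠ x ∧
      d < 4 * (W.filter (fun w => insert w {x, y} ∉ H)).card)).card ≤ Δ := by
    intro x hx
    apply Nat.le_floor
    have h1 := S10.heavy_deg_bound V W H hdisj d hx
    have h2 := hgood x
    have h1' : ((V.filter (fun y => y ≠ x ∧
        d < 4 * (W.filter (fun w => insert w {x, y} ∉ H)).card)).card : ℝ) * ((d:ℝ) + 1)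
        ≤ 4 * ((((Finset.univ : Finset (Finset Vt)).filter (fun e =>
          e.card = 3 ∧ ((e ∩ W).card = 1 ∨ (e ∩ W).card = 2)) \ H).filter
          (fun e => x ∈ e)).card : ℝ) := by exact_mod_cast h1
    rw [le_div_iff₀ hd1R]
    calc ((V.filter (fun y => y ≠ x ∧
        d < 4 * (W.filter (fun w => insert w {x, y} ∉ H)).card)).card : ℝ) * ((d:ℝ) + 1)
        ≤ 4 * ((((Finset.univ : Finset (Finset Vt)).filter (fun e =>
          e.card = 3 ∧ ((e ∩ W).card = 1 ∨ (e ∩ W).card = 2)) \ H).filter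
          (fun e => x ∈ e)).card : ℝ) := h1'
      _ ≤ 4 * A := by linarith [h2]
  have hΔreal : (Δ:ℝ) ≤ 4 * A / ((d:ℝ) + 1) := Nat.floor_le (by positivity)
  -- the two hallB-style facts hold for any nonheavy pair
  by_cases hcase : A < 3*(d:ℝ)/4
  · -- R1: few missing edges
    have h2d : 2 * d ≤ V.card := by omega
    have h3Δ2 : 3 * Δ + 2 ≤ V.card := by
      by_cases hΔ0 : Δ = 0
      · rw [hΔ0]; omega
      · have hΔ1 : 1 ≤ Δ := Nat.one_le_iff_ne_zero.2 hΔ0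
        have hΔ1' : (1:ℝ) ≤ (Δ:ℝ) := by exact_mod_cast hΔ1
        have hd4A : (d:ℝ) + 1 ≤ 4 * A := by
          have h := hΔreal
          rw [le_div_iff₀ hd1R] at h
          nlinarith
        have hn1667 : (1667:ℝ) ≤ (n:ℝ) := by nlinarith
        have hΔ3 : (Δ:ℝ) < 3 := by
          have h4 : 4 * A < 3 * ((d:ℝ)+1) := by nlinarith
          have h := hΔreal
          rw [le_div_iff₀ hd1R] at h
          nlinarith
        have hΔ2 : Δ ≤ 2 := by
          have : Δ < 3 := by exact_mod_cast hΔ3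
          omega
        have hVlarge : (1111:ℝ) ≤ ((V.card : ℕ):ℝ) := by
          rw [hVcard]
          rw [Nat.cast_sub hdn]
          linarith
        have : ((3 * Δ + 2 : ℕ):ℝ) ≤ ((V.card : ℕ):ℝ) := by push_cast; linarith
        exact_mod_cast this
    obtain ⟨C, hCcard, hCmem, hCd⟩ := S10.swap_matching
      (fun p => d < 4 * (W.filter (fun w => insert w p ∉ H)).card) V Δ hdegΔ h3Δ2 d h2d
    apply S10.hall_finish V W H hdisj d hW C hCcard
      (fun p hp => ⟨(hCmem p hp).1, (hCmem p hp).2.1⟩) hCd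
    · intro w hw
      have hsub : C.filter (fun p => insert w p ∉ H) ⊆
          (V.powersetCard 2).filter (fun p => insert w p ∉ H) := by
        intro p hp
        obtain ⟨hpC, hpcond⟩ := Finset.mem_filter.1 hp
        exact Finset.mem_filter.2 ⟨Finset.mem_powersetCard.2
          ⟨(hCmem p hpC).1, (hCmem p hpC).2.1⟩, hpcond⟩
      calc ((C.filter (fun p => insert w p ∉ H)).card : ℝ)
          ≤ (((V.powersetCard 2).filter (fun p => insert w p ∉ H)).card : ℝ) := by
            exact_mod_cast Finset.card_le_card hsub
        _ ≤ A := hmissW w hw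
        _ < 3*(d:ℝ)/4 := hcase
    · intro p hp
      have hnb := (hCmem p hp).2.2
      have h1 : 4 * (W.filter (fun w => insert w p ∉ H)).card ≤ d := by omega
      have h2 : (4:ℝ) * (((W.filter (fun w => insert w p ∉ H)).card : ℝ)) ≤ (d:ℝ) := by
        exact_mod_cast h1
      linarith
  · -- R2
    push_neg at hcase
    have hd34 : 34 ≤ d := by
      have h33 : (33:ℝ) < (d:ℝ) := by nlinarith [hcase, hAn, hn2, hdposR]
      have : 33 < d := by exact_mod_cast h33
      omega
    have hd34R : (34:ℝ) ≤ (d:ℝ) := by exact_mod_cast hd34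
    set X := Real.sqrt A with hXdef
    have hX0 : 0 ≤ X := Real.sqrt_nonneg A
    have hXsq : X^2 = A := Real.sq_sqrt hA0
    have hX5 : 5 ≤ X := by nlinarith [hXsq, hcase, hd34R, hX0]
    have hXd : X ≤ 0.15 * (d:ℝ) := by
      nlinarith [hXsq, hAn, hn2, hX0, hdposR]
    set f₀ : ℕ := ⌈3 * X⌉₊ + 2 with hf₀def
    have hf₀low : 3*X + 2 ≤ (f₀:ℝ) := by
      rw [hf₀def]
      push_cast
      have := Nat.le_ceil (3*X)
      linarith
    have hf₀up : (f₀:ℝ) ≤ 3*X + 3 := by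
      rw [hf₀def]
      push_cast
      have := Nat.ceil_lt_add_one (by positivity : (0:ℝ) ≤ 3*X)
      linarith
    have hf₀3 : 3 ≤ f₀ := by
      have h1 : (3:ℝ) ≤ (f₀:ℝ) := by linarith
      exact_mod_cast h1
    have hΔX : (Δ:ℝ) ≤ 0.6 * X := by
      have h2 : 4*A/((d:ℝ)+1) ≤ 4*A/(d:ℝ) :=
        div_le_div_of_nonneg_left (by linarith) hdposR (by linarith)
      have h3 : 4*A/(d:ℝ) ≤ 0.6*X := by
        rw [div_le_iff₀ hdposR]
        nlinarith [hXsq, hXd, hX0, hdposR]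
      linarith [hΔreal]
    have h4Δf₀ : 4*Δ + 1 ≤ f₀ + 2 := by
      have h1 : 4*(Δ:ℝ) ≤ (f₀:ℝ) := by linarith
      have h2 : 4*Δ ≤ f₀ := by exact_mod_cast h1
      omega
    have h3Δf₀ : 3*Δ + 2 ≤ f₀ := by
      have h1 : 3*(Δ:ℝ) + 2 ≤ (f₀:ℝ) := by linarith
      exact_mod_cast h1
    have hVcR : ((V.card : ℕ):ℝ) = (n:ℝ) - (d:ℝ) := by
      rw [hVcard, Nat.cast_sub hdn]
    have hf₀N : f₀ ≤ V.card := by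
      have h1 : (f₀:ℝ) ≤ ((V.card : ℕ):ℝ) := by
        rw [hVcR]
        have h3dn : 3*(d:ℝ) ≤ (n:ℝ) := by exact_mod_cast hn3d
        linarith
      exact_mod_cast h1
    set k₁ := min d ((V.card - f₀)/2) with hk₁def
    have hk₁a : f₀ + 2*k₁ ≤ V.card := by
      have h1 : k₁ ≤ (V.card - f₀)/2 := min_le_right _ _
      omega
    have hk₁d : k₁ ≤ d := min_le_left _ _
    obtain ⟨C₁, R, _, hC₁card, hRsub, hRcard, hC₁props, hC₁disj, hC₁Phi⟩ :=
      S10.stage1 W V H (fun p => d < 4 * (W.filter (fun w => insert w p ∉ H)).card)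
        A hA0 Δ f₀ hf₀3 hdegΔ hmissW h4Δf₀ k₁ V ∅ subset_rfl hk₁a
        (fun p hp => absurd hp (Finset.notMem_empty p)) (by simp)
    have hRV : R ⊆ V := hRsub
    have hRcard' : R.card = V.card - 2*k₁ := hRcard
    have hRf₀ : f₀ ≤ R.card := by omega
    set u := d - k₁ with hudef
    have h2dN : 2*d ≤ V.card := by omega
    have hdegR : ∀ x ∈ R, (R.filter (fun y => y ≠ x ∧
        d < 4 * (W.filter (fun w => insert w {x, y} ∉ H)).card)).card ≤ Δ := by
      intro x hx
      calc (R.filter (fun y => y ≠ x ∧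
          d < 4 * (W.filter (fun w => insert w {x, y} ∉ H)).card)).card
          ≤ (V.filter (fun y => y ≠ x ∧
          d < 4 * (W.filter (fun w => insert w {x, y} ∉ H)).card)).card :=
            Finset.card_le_card (Finset.filter_subset_filter _ hRV)
        _ ≤ Δ := hdegΔ x (hRV hx)
    obtain ⟨Mt, hMtcard, hMtmem, hMtdisj⟩ := S10.swap_matching
      (fun p => d < 4 * (W.filter (fun w => insert w p ∉ H)).card) R Δ hdegR
      (le_trans h3Δf₀ hRf₀) u (by omega)
    have hu2 : 2*u ≤ f₀ + 1 := by
      rcases min_cases d ((V.card - f₀)/2) with ⟨h1, h2⟩ | ⟨h1, h2⟩ <;>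
        · rw [← hk₁def] at h1
          omega
    have hC₁R : ∀ p ∈ C₁, Disjoint p R := fun p hp => (hC₁props p hp).2.2.2
    have hCMt : Disjoint C₁ Mt := by
      rw [Finset.disjoint_left]
      intro p hpC hpM
      obtain ⟨hpR, hpcard, _⟩ := hMtmem p hpM
      have hne : p.Nonempty := by rw [← Finset.card_pos, hpcard]; omega
      obtain ⟨z, hz⟩ := hne
      exact Finset.disjoint_left.1 (hC₁R p hpC) hz (hpR hz)
    set C := C₁ ∪ Mt with hCdef
    have hCcard : C.card = d := by
      rw [hCdef, Finset.card_union_of_disjoint hCMt, hC₁card, hMtcard]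
      simp only [Finset.card_empty]
      omega
    have hCp : ∀ p ∈ C, (p ⊆ V ∧ p.card = 2) ∧
        ¬ (d < 4 * (W.filter (fun w => insert w p ∉ H)).card) := by
      intro p hp
      rcases Finset.mem_union.1 hp with hp | hp
      · obtain ⟨h1, h2, h3, _⟩ := hC₁props p hp
        exact ⟨⟨h1, h2⟩, h3⟩
      · obtain ⟨h1, h2, h3⟩ := hMtmem p hp
        exact ⟨⟨h1.trans hRV, h2⟩, h3⟩
    have hCd : (C : Set (Finset Vt)).PairwiseDisjoint id := by
      intro a ha b hb hab
      have ha' := Finset.mem_coe.1 ha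
      have hb' := Finset.mem_coe.1 hb
      rw [hCdef] at ha' hb'
      rcases Finset.mem_union.1 ha' with ha1 | ha1 <;>
        rcases Finset.mem_union.1 hb' with hb1 | hb1
      · exact hC₁disj (Finset.mem_coe.2 ha1) (Finset.mem_coe.2 hb1) hab
      · exact ((hC₁R a ha1).mono_right (hMtmem b hb1).1 : Disjoint a b)
      · exact (((hC₁R b hb1).mono_right (hMtmem a ha1).1).symm : Disjoint a b)
      · exact hMtdisj (Finset.mem_coe.2 ha1) (Finset.mem_coe.2 hb1) hab
    apply S10.hall_finish V W H hdisj d hW C hCcard (fun p hp => (hCp p hp).1) hCd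
    · -- hallA
      intro w hw
      set c₁ := (C₁.filter (fun p => insert w p ∉ H)).card with hc₁def
      have hsplit : (C.filter (fun p => insert w p ∉ H)).card ≤ c₁ + u := by
        rw [hCdef, Finset.filter_union]
        calc ((C₁.filter (fun p => insert w p ∉ H)) ∪
            (Mt.filter (fun p => insert w p ∉ H))).card
            ≤ c₁ + (Mt.filter (fun p => insert w p ∉ H)).card := Finset.card_union_le _ _
          _ ≤ c₁ + u := by
              have h := Finset.card_filter_le Mt (fun p => insert w p ∉ H)
              omega
      have hPhiE : S10.Phi W H (∅ : Finset (Finset Vt)) = (d:ℝ) := by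
        rw [S10.Phi_empty'] ; rw [hW]
      have h2c : (2:ℝ)^c₁ ≤ (d:ℝ) * Real.exp (2*A/(((V.card : ℕ):ℝ) - 2*k₁)
          - 2*A/((V.card : ℕ):ℝ)) := by
        calc (2:ℝ)^c₁ ≤ S10.Phi W H C₁ := S10.le_Phi W H C₁ hw
          _ ≤ S10.Phi W H ∅ * Real.exp (2*A/(((V.card : ℕ):ℝ) - 2*k₁)
              - 2*A/((V.card : ℕ):ℝ)) := hC₁Phi
          _ = (d:ℝ) * Real.exp (2*A/(((V.card : ℕ):ℝ) - 2*k₁)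
              - 2*A/((V.card : ℕ):ℝ)) := by rw [hPhiE]
      have hRcR : ((R.card : ℕ):ℝ) = ((V.card : ℕ):ℝ) - 2*k₁ := by
        rw [hRcard']
        have h1 : 2*k₁ ≤ V.card := by omega
        push_cast [h1]
        ring
      have hEbound : 2*A/(((V.card : ℕ):ℝ) - 2*k₁) - 2*A/((V.card : ℕ):ℝ) ≤ (2/3)*X := by
        have hRpos : (3*X:ℝ) ≤ ((V.card : ℕ):ℝ) - 2*k₁ := by
          rw [← hRcR]
          have h1 : (f₀:ℝ) ≤ ((R.card : ℕ):ℝ) := by exact_mod_cast hRf₀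
          linarith
        have hXpos : (0:ℝ) < 3*X := by linarith
        have h2 : 2*A/(((V.card : ℕ):ℝ) - 2*k₁) ≤ 2*A/(3*X) :=
          div_le_div_of_nonneg_left (by linarith) hXpos hRpos
        have h3 : 2*A/(3*X) = (2/3)*X := by
          rw [← hXsq]
          field_simp
        have h4 : (0:ℝ) ≤ 2*A/((V.card : ℕ):ℝ) := by positivity
        linarith
      have h2c' : (2:ℝ)^c₁ ≤ (d:ℝ) * Real.exp ((2/3)*X) := by
        calc (2:ℝ)^c₁ ≤ (d:ℝ) * Real.exp (2*A/(((V.card : ℕ):ℝ) - 2*k₁)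
            - 2*A/((V.card : ℕ):ℝ)) := h2c
          _ ≤ (d:ℝ) * Real.exp ((2/3)*X) :=
              mul_le_mul_of_nonneg_left (Real.exp_le_exp.2 hEbound) (le_of_lt hdposR)
      have hc₁R : (c₁:ℝ) * Real.log 2 ≤ Real.log d + (2/3)*X := by
        have hlog := Real.log_le_log (by positivity : (0:ℝ) < (2:ℝ)^c₁) h2c'
        rw [Real.log_pow, Real.log_mul (ne_of_gt hdposR) (Real.exp_ne_zero _),
          Real.log_exp] at hlog
        exact_mod_cast hlog
      have hlogd : Real.log d ≤ 6 * Real.log 2 + (d:ℝ)/64 - 1 := by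
        have h64 : Real.log ((d:ℝ)/64) ≤ (d:ℝ)/64 - 1 :=
          Real.log_le_sub_one_of_pos (by positivity)
        have hsplit64 : Real.log (d:ℝ) = Real.log ((d:ℝ)/64) + Real.log 64 := by
          rw [← Real.log_mul (by positivity) (by norm_num)]
          congr 1
          field_simp
        have h642 : Real.log (64:ℝ) = 6 * Real.log 2 := by
          rw [show (64:ℝ) = 2^6 by norm_num, Real.log_pow]
          push_cast
          ring
        rw [hsplit64, h642] at *
        linarith
      have hL1 := Real.log_two_gt_d9
      have hL2 := Real.log_two_lt_d9
      have hc₁0 : (0:ℝ) ≤ (c₁:ℝ) := by positivity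
      have hprod : (c₁:ℝ) * 0.6931471803 ≤ (c₁:ℝ) * Real.log 2 :=
        mul_le_mul_of_nonneg_left (le_of_lt hL1) hc₁0
      have huR : (u:ℝ) ≤ (3*X + 4)/2 := by
        have h1 : 2*(u:ℝ) ≤ (f₀:ℝ) + 1 := by exact_mod_cast hu2
        linarith
      have hcardsplit : ((C.filter (fun p => insert w p ∉ H)).card : ℝ)
          ≤ (c₁:ℝ) + (u:ℝ) := by exact_mod_cast hsplit
      calc ((C.filter (fun p => insert w p ∉ H)).card : ℝ) ≤ (c₁:ℝ) + u := hcardsplit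
        _ < 3*(d:ℝ)/4 := by linarith
    · intro p hp
      have hnb := (hCp p hp).2
      have h1 : 4 * (W.filter (fun w => insert w p ∉ H)).card ≤ d := by omega
      have h2 : (4:ℝ) * (((W.filter (fun w => insert w p ∉ H)).card : ℝ)) ≤ (d:ℝ) := by
        exact_mod_cast h1
      linarith
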